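/- arXiv:1205.0390 — 3 statements merged into one kernel-verified Lean document; each statement's English description precedes it below -/
import Mathlib

section
/- Let (R, m) be a 1-dimensional Noetherian local ring, I an m-primary ideal, 𝓘 = {I_n} an I-admissible filtration, and J = (x) ⊆ I_1 a parameter ideal with e_0(J) = e_0(𝓘). Then J is a reduction of 𝓘, i.e., x·I_n = I_{n+1} for all sufficiently large n. -/
open IsLocalRing

/-- Length of a module, as the Krull dimension of its lattice of submodules. -/
noncomputable def modLen (R M : Type*) [CommRing R] [AddCommGroup M] [Module R M] : ℕ :=
  (WithBot.unbotD 0 (Order.krullDim (Submodule R M))).toNat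

section Lattice

open Order

variable {α : Type*} [Lattice α] [IsModularLattice α]

lemma exists_chains (a : α) (p : LTSeries α) :
    ∃ (q : LTSeries {x : α // x ≤ a}) (r : LTSeries {x : α // a ≤ x}),
      p.length ≤ q.length + r.length ∧ (q.last : α) = p.last ⊓ a ∧
        (r.last : α) = p.last ⊔ a := by
  suffices h : ∀ (n : ℕ) (p : LTSeries α), p.length = n →
      ∃ (q : LTSeries {x : α // x ≤ a}) (r : LTSeries {x : α // a ≤ x}),
        p.length ≤ q.length + r.length ∧ (q.last : α) = p.last ⊓ a ∧
          (r.last : α) = p.last ⊔ a from h p.length p rfl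
  intro n
  induction n with
  | zero =>
      intro p hl
      exact ⟨RelSeries.singleton _ ⟨p.last ⊓ a, inf_le_right⟩,
        RelSeries.singleton _ ⟨p.last ⊔ a, le_sup_right⟩, by simp [hl], rfl, rfl⟩
  | succ n ih =>
      intro p hl
      have hne : p.length ≠ 0 := by omega
      have hstep : p.eraseLast.last < p.last := p.eraseLast_last_rel_last hne
      have h1 : p.eraseLast.length = n := by
        simp only [RelSeries.eraseLast_length, hl]
        omega
      obtain ⟨q, r, hlen, hq, hr⟩ := ih p.eraseLast h1
      by_cases hinf : p.eraseLast.last ⊓ a < p.last ⊓ a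
      · by_cases hsup : p.eraseLast.last ⊔ a < p.last ⊔ a
        · refine ⟨q.snoc ⟨p.last ⊓ a, inf_le_right⟩ (by show (q.last : α) < p.last ⊓ a; rw [hq]; exact hinf),
            r.snoc ⟨p.last ⊔ a, le_sup_right⟩ (by show (r.last : α) < p.last ⊔ a; rw [hr]; exact hsup),
            ?_, by simp, by simp⟩
          simp only [RelSeries.snoc_length]
          omega
        · have hsupeq : p.eraseLast.last ⊔ a = p.last ⊔ a :=
            ((sup_le_sup_right hstep.le a).lt_or_eq).resolve_left hsup
          refine ⟨q.snoc ⟨p.last ⊓ a, inf_le_right⟩ (by show (q.last : α) < p.last ⊓ a; rw [hq]; exact hinf),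
            r, ?_, by simp, hr.trans hsupeq⟩
          simp only [RelSeries.snoc_length]
          omega
      · have hinfeq : p.eraseLast.last ⊓ a = p.last ⊓ a :=
          ((inf_le_inf_right a hstep.le).lt_or_eq).resolve_left hinf
        have hsup : p.eraseLast.last ⊔ a < p.last ⊔ a :=
          sup_lt_sup_of_lt_of_inf_le_inf hstep (le_of_eq hinfeq.symm)
        refine ⟨q, r.snoc ⟨p.last ⊔ a, le_sup_right⟩
            (by show (r.last : α) < p.last ⊔ a; rw [hr]; exact hsup),
          ?_, hq.trans hinfeq, by simp⟩
        simp only [RelSeries.snoc_length]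
        omega

lemma krullDim_le'' {β : Type*} [Preorder β] {c : WithBot ℕ∞}
    (h : ∀ p : LTSeries β, (p.length : WithBot ℕ∞) ≤ c) : krullDim β ≤ c :=
  sSup_le (by rintro _ ⟨p, rfl⟩; exact h p)

lemma krullDim_Iic_le (a : α) :
    krullDim {x : α // x ≤ a} ≤ ((height a : ℕ∞) : WithBot ℕ∞) := by
  apply krullDim_le''
  intro q
  have hb : (q.map Subtype.val (fun _ _ h => h)).length ≤ height a :=
    Order.length_le_height (by exact (q.last).2)
  exact_mod_cast hb

lemma krullDim_Ici_le (a : α) :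
    krullDim {x : α // a ≤ x} ≤ ((coheight a : ℕ∞) : WithBot ℕ∞) := by
  apply krullDim_le''
  intro q
  have hb : (q.map Subtype.val (fun _ _ h => h)).length ≤ coheight a :=
    Order.length_le_coheight (by exact (q.head).2)
  exact_mod_cast hb

lemma modular_krullDim_eq (a : α) :
    krullDim α = krullDim {x : α // x ≤ a} + krullDim {x : α // a ≤ x} := by
  have hne : Nonempty α := ⟨a⟩
  apply le_antisymm
  · apply krullDim_le''
    intro p
    obtain ⟨q, r, hlen, -, -⟩ := exists_chains a p
    calc ((p.length : ℕ) : WithBot ℕ∞) ≤ ((q.length : ℕ∞) : WithBot ℕ∞)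
          + ((r.length : ℕ∞) : WithBot ℕ∞) := by
            rw [← WithBot.coe_add]
            exact_mod_cast hlen
      _ ≤ krullDim {x : α // x ≤ a} + krullDim {x : α // a ≤ x} :=
          add_le_add (Order.LTSeries.length_le_krullDim q) (Order.LTSeries.length_le_krullDim r)
  · calc krullDim {x : α // x ≤ a} + krullDim {x : α // a ≤ x}
        ≤ ((height a : ℕ∞) : WithBot ℕ∞) + ((coheight a : ℕ∞) : WithBot ℕ∞) :=
          add_le_add (krullDim_Iic_le a) (krullDim_Ici_le a)
      _ = ((height a + coheight a : ℕ∞) : WithBot ℕ∞) := (WithBot.coe_add _ _).symm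
      _ ≤ ((⨆ b : α, height b + coheight b : ℕ∞) : WithBot ℕ∞) := by
          exact_mod_cast le_iSup (fun b : α => height b + coheight b) a
      _ = krullDim α := (krullDim_eq_iSup_height_add_coheight_of_nonempty).symm

end Lattice

section ModLen

open Order

variable {R M N : Type*} [CommRing R] [AddCommGroup M] [Module R M]
  [AddCommGroup N] [Module R N]

lemma modLen_congr (e : M ≃ₗ[R] N) : modLen R M = modLen R N := by
  unfold modLen
  rw [Order.krullDim_eq_of_orderIso (Submodule.orderIsoMapComap e)]

lemma dim_additive (S : Submodule R M) :
    krullDim (Submodule R M)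
      = krullDim (Submodule R S) + krullDim (Submodule R (M ⧸ S)) := by
  rw [krullDim_eq_of_orderIso (Submodule.MapSubtype.orderIso S),
      krullDim_eq_of_orderIso (Submodule.comapMkQRelIso S)]
  exact modular_krullDim_eq S

lemma krullDim_eq_one_of_simple {β : Type*} [PartialOrder β] [BoundedOrder β]
    [IsSimpleOrder β] : krullDim β = (1 : ℕ) := by
  apply le_antisymm
  · apply krullDim_le''
    intro p
    have hp : p.length ≤ 1 := by
      by_contra hc
      push_neg at hc
      have h01 : p.toFun ⟨0, by omega⟩ < p.toFun ⟨1, by omega⟩ :=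
        p.strictMono (by simp [Fin.lt_def])
      have h12 : p.toFun ⟨1, by omega⟩ < p.toFun ⟨2, by omega⟩ :=
        p.strictMono (by simp [Fin.lt_def])
      rcases eq_bot_or_eq_top (p.toFun ⟨1, by omega⟩) with h | h
      · rw [h] at h01; exact (not_lt_bot h01)
      · rw [h] at h12; exact (not_top_lt h12)
    exact_mod_cast hp
  · have h := Order.LTSeries.length_le_krullDim
      ((RelSeries.singleton _ (⊥ : β) : LTSeries β).snoc ⊤ bot_lt_top)
    simpa [RelSeries.snoc, RelSeries.append] using h

lemma IsFiniteLength.submod (h : IsFiniteLength R M) (S : Submodule R M) :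
    IsFiniteLength R S := by
  obtain ⟨hn, ha⟩ := isFiniteLength_iff_isNoetherian_isArtinian.mp h
  exact isFiniteLength_iff_isNoetherian_isArtinian.mpr ⟨inferInstance, inferInstance⟩

lemma IsFiniteLength.quot (h : IsFiniteLength R M) (S : Submodule R M) :
    IsFiniteLength R (M ⧸ S) := by
  obtain ⟨hn, ha⟩ := isFiniteLength_iff_isNoetherian_isArtinian.mp h
  exact isFiniteLength_iff_isNoetherian_isArtinian.mpr ⟨inferInstance, inferInstance⟩

lemma dim_eq_modLen (h : IsFiniteLength R M) :
    krullDim (Submodule R M) = ((modLen R M : ℕ) : WithBot ℕ∞) := by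
  suffices h' : ∃ n : ℕ, krullDim (Submodule R M) = (n : WithBot ℕ∞) by
    obtain ⟨n, hn⟩ := h'
    have hm : modLen R M = n := by
      rw [modLen, hn]
      rfl
    rw [hm, hn]
  induction h with
  | of_subsingleton =>
      rename_i M' _ _ _
      have hsub : Subsingleton (Submodule R M') := by
        constructor
        intro A B
        ext y
        rw [Subsingleton.elim y 0]
        simp
      exact ⟨0, le_antisymm (by simpa using krullDim_nonpos_of_subsingleton)
        (by simpa using krullDim_nonneg)⟩
  | of_simple_quotient hfl ih =>
      rename_i M' _ _ S _
      obtain ⟨n, hn⟩ := ih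
      refine ⟨n + 1, ?_⟩
      rw [dim_additive S, hn, krullDim_eq_one_of_simple]
      norm_cast

end ModLen

section EqLen

variable {R : Type*} [CommRing R]

lemma modLen_add {M : Type*} [AddCommGroup M] [Module R M]
    (h : IsFiniteLength R M) (S : Submodule R M) :
    modLen R M = modLen R S + modLen R (M ⧸ S) := by
  have h1 := dim_eq_modLen (h.submod S)
  have h2 := dim_eq_modLen (h.quot S)
  have h3 := dim_eq_modLen h
  have h4 := dim_additive S
  rw [h1, h2, h3] at h4
  exact_mod_cast h4

lemma eq_of_le_of_modLen_eq {A B : Ideal R} (hAB : A ≤ B)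
    (hfl : IsFiniteLength R (R ⧸ A))
    (hlen : modLen R (R ⧸ A) = modLen R (R ⧸ B)) : A = B := by
  set S : Submodule R (R ⧸ A) := Submodule.map A.mkQ B with hSdef
  have e : ((R ⧸ A) ⧸ S) ≃ₗ[R] R ⧸ B := Submodule.quotientQuotientEquivQuotient A B hAB
  have hadd := modLen_add hfl S
  rw [modLen_congr e, ← hlen] at hadd
  have hS : modLen R ↥S = 0 := by omega
  have hdim := dim_eq_modLen (hfl.submod S)
  rw [hS] at hdim
  have hSbot : S = ⊥ := by
    by_contra hne
    obtain ⟨y, hy, hy0⟩ := S.ne_bot_iff.mp hne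
    have hlt : (⊥ : Submodule R ↥S) < ⊤ := by
      refine lt_of_le_of_ne bot_le ?_
      intro hcontra
      have : (⟨y, hy⟩ : ↥S) ∈ (⊥ : Submodule R ↥S) := by rw [hcontra]; trivial
      rw [Submodule.mem_bot] at this
      exact hy0 (congrArg Subtype.val this)
    have hser := Order.LTSeries.length_le_krullDim
      ((RelSeries.singleton _ (⊥ : Submodule R ↥S) : LTSeries _).snoc ⊤ hlt)
    rw [hdim] at hser
    simp only [RelSeries.snoc, RelSeries.append, RelSeries.singleton_length,
      Nat.add_zero, Nat.cast_one] at hser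
    have hser' : (1 : ℕ) ≤ 0 := by exact_mod_cast hser
    omega
  refine le_antisymm hAB fun b hb => ?_
  have hmem : A.mkQ b ∈ S := Submodule.mem_map_of_mem hb
  rw [hSbot, Submodule.mem_bot] at hmem
  exact (Submodule.Quotient.mk_eq_zero A).mp hmem

end EqLen

section Artinian

lemma isArtinian_of_surj_scalars {R S M : Type*} [CommRing R] [Ring S] [AddCommGroup M]
    [Module R M] [Module S M] (f : R →+* S) (hf : Function.Surjective f)
    (hc : ∀ (r : R) (x : M), f r • x = r • x)
    (h : IsArtinian S M) : IsArtinian R M := by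
  let g : Submodule R M → Submodule S M := fun N =>
    { carrier := N
      add_mem' := fun ha hb => N.add_mem ha hb
      zero_mem' := N.zero_mem
      smul_mem' := by
        intro c x hx
        obtain ⟨r, rfl⟩ := hf c
        rw [hc]
        exact N.smul_mem r hx }
  have hmono : ∀ {A B : Submodule R M}, A < B → g A < g B := by
    intro A B hAB
    rw [SetLike.lt_iff_le_and_exists] at hAB ⊢
    exact hAB
  exact ⟨Subrelation.wf (fun {A B} hAB => hmono hAB) (InvImage.wf g h.wf)⟩

variable {R : Type*} [CommRing R] [IsNoetherianRing R] [IsLocalRing R]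

lemma isArtinian_of_torsion_max {M : Type*} [AddCommGroup M] [Module R M] [Module.Finite R M]
    (h : Module.IsTorsionBySet R M ((maximalIdeal R : Ideal R) : Set R)) : IsArtinian R M := by
  letI := h.module
  haveI : IsScalarTower R (R ⧸ maximalIdeal R) M := h.isScalarTower
  haveI : Module.Finite (R ⧸ maximalIdeal R) M :=
    Module.Finite.of_restrictScalars_finite R _ M
  letI : Field (R ⧸ maximalIdeal R) := Ideal.Quotient.field _
  haveI : IsArtinian (R ⧸ maximalIdeal R) M := isArtinian_of_fg_of_artinian'
  refine isArtinian_of_surj_scalars (Ideal.Quotient.mk (maximalIdeal R))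
    Ideal.Quotient.mk_surjective (fun r x => ?_) this
  exact h.mk_smul r x

lemma isArtinian_of_torsion_pow (c : ℕ) :
    ∀ (M : Type*) [AddCommGroup M] [Module R M] [Module.Finite R M],
      Module.IsTorsionBySet R M ((maximalIdeal R ^ c : Ideal R) : Set R) → IsArtinian R M := by
  induction c with
  | zero =>
      intro M _ _ _ h
      have hsub : Subsingleton M := by
        constructor
        intro a b
        have ha := @h a ⟨(1 : R), by simp⟩
        have hb := @h b ⟨(1 : R), by simp⟩
        simp only [one_smul] at ha hb
        rw [ha, hb]
      haveI : Finite M := Finite.of_subsingleton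
      infer_instance
  | succ c ih =>
      intro M _ _ _ h
      set N : Submodule R M := maximalIdeal R • ⊤ with hNdef
      haveI : Module.Finite R N := Module.Finite.iff_fg.mpr (IsNoetherian.noetherian N)
      have hN : Module.IsTorsionBySet R ↥N ((maximalIdeal R ^ c : Ideal R) : Set R) := by
        rintro ⟨x, hx⟩ ⟨a, ha⟩
        refine Subtype.ext ?_
        show a • x = 0
        refine Submodule.smul_induction_on hx (fun r hr y _ => ?_) (fun y z hy hz => ?_)
        · rw [smul_comm]
          have : (r * a) • y = 0 := @h y ⟨r * a, by
            rw [pow_succ']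
            exact Ideal.mul_mem_mul hr ha⟩
          rw [← this, mul_smul]
        · rw [smul_add, hy, hz, add_zero]
      haveI hNa : IsArtinian R ↥N := ih ↥N hN
      have hQt : Module.IsTorsionBySet R (M ⧸ N) ((maximalIdeal R : Ideal R) : Set R) := by
        rintro x ⟨a, ha⟩
        induction x using Submodule.Quotient.induction_on with
        | _ y =>
          show a • (Submodule.Quotient.mk y : M ⧸ N) = 0
          rw [← Submodule.Quotient.mk_smul, Submodule.Quotient.mk_eq_zero]
          exact Submodule.smul_mem_smul ha trivial
      haveI hQa : IsArtinian R (M ⧸ N) := isArtinian_of_torsion_max hQt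
      exact (isArtinian_iff_submodule_quotient N).mpr ⟨hNa, hQa⟩

end Artinian

section Key

variable {R : Type*} [CommRing R] [IsNoetherianRing R] [IsLocalRing R]

lemma fl_of_pow_le (A : Ideal R) (c : ℕ) (h : maximalIdeal R ^ c ≤ A) :
    IsFiniteLength R (R ⧸ A) := by
  rw [isFiniteLength_iff_isNoetherian_isArtinian]
  refine ⟨inferInstance, ?_⟩
  refine isArtinian_of_torsion_pow c _ ?_
  rintro y ⟨a, ha⟩
  induction y using Submodule.Quotient.induction_on with
  | _ z =>
    show a • (Submodule.Quotient.mk z : R ⧸ A) = 0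
    rw [← Submodule.Quotient.mk_smul, Submodule.Quotient.mk_eq_zero, smul_eq_mul]
    exact Ideal.mul_mem_right z A (h ha)

lemma fl_ker_lsmul (x : R) (t : ℕ) (ht : maximalIdeal R ^ t ≤ Ideal.span {x}) :
    IsFiniteLength R ↥(LinearMap.ker (LinearMap.lsmul R R x)) := by
  rw [isFiniteLength_iff_isNoetherian_isArtinian]
  refine ⟨inferInstance, ?_⟩
  refine isArtinian_of_torsion_pow t _ ?_
  rintro ⟨w, hw⟩ ⟨a, ha⟩
  refine Subtype.ext ?_
  show a • w = 0
  obtain ⟨y, hy⟩ := Ideal.mem_span_singleton'.mp (ht ha)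
  have hw0 : x * w = 0 := by
    simpa [LinearMap.lsmul_apply, smul_eq_mul] using hw
  calc a • w = (y * x) * w := by rw [smul_eq_mul, hy]
    _ = y * (x * w) := by ring
    _ = 0 := by rw [hw0, mul_zero]

lemma key_len (x : R) (A : Ideal R)
    (hdisj : A ⊓ LinearMap.ker (LinearMap.lsmul R R x) = ⊥)
    (c : ℕ) (hc : maximalIdeal R ^ c ≤ Ideal.span {x} * A) :
    modLen R (R ⧸ (Ideal.span {x} * A : Ideal R))
        + modLen R ↥(LinearMap.ker (LinearMap.lsmul R R x))
      = modLen R (R ⧸ (Ideal.span {x} : Ideal R)) + modLen R (R ⧸ A) := by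
  set W : Submodule R R := LinearMap.ker (LinearMap.lsmul R R x) with hW
  set J : Ideal R := Ideal.span {x} with hJ
  have hJA_le_J : J * A ≤ J := Ideal.mul_le_left
  have hJA_le_A : J * A ≤ A := Ideal.mul_le_right
  have hfl1 : IsFiniteLength R (R ⧸ (J * A : Ideal R)) := fl_of_pow_le _ c hc
  set S1 : Submodule R (R ⧸ (J * A : Ideal R)) := Submodule.map (Submodule.mkQ (J * A)) J with hS1
  have hadd1 := modLen_add hfl1 S1
  have e1 : ((R ⧸ (J * A : Ideal R)) ⧸ S1) ≃ₗ[R] R ⧸ J :=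
    Submodule.quotientQuotientEquivQuotient (J * A) J hJA_le_J
  set φ : R →ₗ[R] (R ⧸ (J * A : Ideal R)) :=
    (Submodule.mkQ (J * A)) ∘ₗ (LinearMap.lsmul R R x) with hφ
  have hker : LinearMap.ker φ = A ⊔ W := by
    ext r
    simp only [hφ, LinearMap.mem_ker, LinearMap.coe_comp, Function.comp_apply,
      LinearMap.lsmul_apply, Submodule.mkQ_apply, Submodule.Quotient.mk_eq_zero, smul_eq_mul]
    constructor
    · intro hmem
      obtain ⟨z, hz, hxz⟩ := Ideal.mem_span_singleton_mul.mp hmem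
      refine Submodule.mem_sup.mpr ⟨z, hz, r - z, ?_, by ring⟩
      show r - z ∈ W
      rw [hW, LinearMap.mem_ker, LinearMap.lsmul_apply, smul_eq_mul, mul_sub, hxz, sub_self]
    · intro hmem
      obtain ⟨a, ha, w, hwmem, rfl⟩ := Submodule.mem_sup.mp hmem
      have hw0 : x * w = 0 := by
        have := hwmem
        rw [hW, LinearMap.mem_ker, LinearMap.lsmul_apply, smul_eq_mul] at this
        exact this
      rw [mul_add, hw0, add_zero]
      exact Ideal.mul_mem_mul (Ideal.mem_span_singleton_self x) ha
  have hrange : LinearMap.range φ = S1 := by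
    rw [hφ, LinearMap.range_comp, hS1]
    congr 1
    ext r
    simp only [LinearMap.mem_range, LinearMap.lsmul_apply, smul_eq_mul]
    rw [hJ, Ideal.mem_span_singleton']
    constructor
    · rintro ⟨y, rfl⟩; exact ⟨y, mul_comm y x⟩
    · rintro ⟨y, rfl⟩; exact ⟨y, mul_comm x y⟩
  have e2 : (R ⧸ (A ⊔ W : Submodule R R)) ≃ₗ[R] ↥S1 :=
    (Submodule.quotEquivOfEq _ _ hker.symm) ≪≫ₗ φ.quotKerEquivRange
      ≪≫ₗ (LinearEquiv.ofEq _ _ hrange)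
  have hfl2 : IsFiniteLength R (R ⧸ A) := fl_of_pow_le _ c (le_trans hc hJA_le_A)
  set S2 : Submodule R (R ⧸ A) := Submodule.map (Submodule.mkQ A) (A ⊔ W) with hS2
  have hadd2 := modLen_add hfl2 S2
  have e3 : ((R ⧸ A) ⧸ S2) ≃ₗ[R] R ⧸ (A ⊔ W : Submodule R R) :=
    Submodule.quotientQuotientEquivQuotient A (A ⊔ W) le_sup_left
  set ψ : ↥W →ₗ[R] (R ⧸ A) := (Submodule.mkQ A) ∘ₗ (Submodule.subtype W) with hψ
  have hψinj : Function.Injective ψ := by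
    rw [← LinearMap.ker_eq_bot]
    ext w
    simp only [hψ, LinearMap.mem_ker, LinearMap.coe_comp, Function.comp_apply,
      Submodule.coe_subtype, Submodule.mkQ_apply, Submodule.Quotient.mk_eq_zero,
      Submodule.mem_bot]
    constructor
    · intro hwa
      have : (w : R) ∈ A ⊓ W := ⟨hwa, w.2⟩
      rw [hdisj, Submodule.mem_bot] at this
      exact Subtype.ext this
    · rintro rfl; simp
  have hψrange : LinearMap.range ψ = S2 := by
    have hS2' : S2 = Submodule.map (Submodule.mkQ A) W := by
      rw [hS2, Submodule.map_sup, Submodule.mkQ_map_self, bot_sup_eq]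
    rw [hψ, LinearMap.range_comp, Submodule.range_subtype, hS2']
  have e4 : ↥W ≃ₗ[R] ↥S2 :=
    (LinearEquiv.ofInjective ψ hψinj) ≪≫ₗ (LinearEquiv.ofEq _ _ hψrange)
  have h1 : modLen R ↥S1 = modLen R (R ⧸ (A ⊔ W : Submodule R R)) := (modLen_congr e2).symm
  have h2 : modLen R ((R ⧸ (J * A : Ideal R)) ⧸ S1) = modLen R (R ⧸ J) := modLen_congr e1
  have h3 : modLen R ((R ⧸ A) ⧸ S2) = modLen R (R ⧸ (A ⊔ W : Submodule R R)) := modLen_congr e3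
  have h4 : modLen R ↥S2 = modLen R ↥W := (modLen_congr e4).symm
  omega

end Key

/-- `F` is an `I`-admissible (ℤ-indexed) filtration of ideals. -/
def IsAdmissibleFiltration {R : Type*} [CommRing R] (I : Ideal R) (F : ℤ → Ideal R) : Prop :=
  (∀ n : ℤ, F (n + 1) ≤ F n) ∧ (∀ m n : ℤ, F m * F n ≤ F (m + n)) ∧
    (∀ n : ℤ, n ≤ 0 → F n = ⊤) ∧
    ∃ k : ℕ, ∀ n : ℤ, I ^ n.toNat ≤ F n ∧ F n ≤ I ^ (n - k).toNat

/-- The length of `A/B` for ideals `B ≤ A`. -/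
noncomputable def idealQuotLen (R : Type*) [CommRing R] (A B : Ideal R) : ℕ :=
  modLen R (A ⧸ Submodule.comap (Submodule.subtype (A : Submodule R R)) (B : Submodule R R))

theorem stmt2 {R : Type*} [CommRing R] [IsNoetherianRing R] [IsLocalRing R]
    (hdim : ringKrullDim R = 1)
    (I : Ideal R) (hI : I.radical = maximalIdeal R)
    (F : ℤ → Ideal R) (hF : IsAdmissibleFiltration I F)
    (x : R) (hx1 : Ideal.span {x} ≤ F 1)
    (hpar : (Ideal.span {x}).radical = maximalIdeal R)
    (e0 e1 : ℤ)
    (hP : ∃ N : ℕ, ∀ n : ℕ, N ≤ n → (modLen R (R ⧸ F n) : ℤ) = e0 * n - e1)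
    (f0 f1 : ℤ)
    (hQ : ∃ N : ℕ, ∀ n : ℕ, N ≤ n →
      (modLen R (R ⧸ (Ideal.span {x} ^ n : Ideal R)) : ℤ) = f0 * n - f1)
    (he : f0 = e0) :
    ∃ N : ℕ, ∀ n : ℕ, N ≤ n → Ideal.span {x} * F n = F (n + 1) := by
  obtain ⟨hF1, hF2, hF3, k, hFk⟩ := hF
  obtain ⟨N1, hN1⟩ := hQ
  obtain ⟨N2, hN2⟩ := hP
  obtain ⟨cI, hcI⟩ := Ideal.exists_radical_pow_le_of_fg I (IsNoetherian.noetherian _)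
  rw [hI] at hcI
  obtain ⟨t, ht⟩ :=
    Ideal.exists_radical_pow_le_of_fg (Ideal.span {x}) (IsNoetherian.noetherian _)
  rw [hpar] at ht
  set W : Submodule R R := LinearMap.ker (LinearMap.lsmul R R x) with hWdef
  have hWfl : IsFiniteLength R ↥W := fl_ker_lsmul x t ht
  have hWart : IsArtinian R ↥W := (isFiniteLength_iff_isNoetherian_isArtinian.mp hWfl).2
  -- stabilization of W ∩ m^n
  set f : ℕ →o (Submodule R ↥W)ᵒᵈ :=
    ⟨fun n => OrderDual.toDual
        (Submodule.comap W.subtype ((maximalIdeal R ^ n : Ideal R) : Submodule R R)),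
      fun a b hab => Submodule.comap_mono (Ideal.pow_le_pow_right hab)⟩ with hfdef
  obtain ⟨n₀, hn₀⟩ := IsArtinian.monotone_stabilizes f
  have hbot : Submodule.comap W.subtype ((maximalIdeal R ^ n₀ : Ideal R) : Submodule R R)
      = ⊥ := by
    have hKrull : (⨅ n : ℕ, maximalIdeal R ^ n) = (⊥ : Ideal R) :=
      Ideal.iInf_pow_eq_bot_of_isLocalRing (maximalIdeal R)
        (Ideal.IsMaximal.ne_top (IsLocalRing.maximalIdeal.isMaximal R))
    ext w
    simp only [Submodule.mem_comap, Submodule.mem_bot]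
    constructor
    · intro hwn
      have hall : ∀ n : ℕ, (W.subtype w) ∈ maximalIdeal R ^ n := by
        intro n
        have h1 : f n₀ = f (max n n₀) := hn₀ _ (le_max_right _ _)
        have hw2 : w ∈ Submodule.comap W.subtype
            ((maximalIdeal R ^ (max n n₀) : Ideal R) : Submodule R R) := by
          have := congrArg OrderDual.ofDual h1
          simp only [hfdef, OrderHom.coe_mk, OrderDual.ofDual_toDual] at this
          change w ∈ OrderDual.ofDual (f (max n n₀)); rw [← h1]
          exact hwn
        exact Ideal.pow_le_pow_right (le_max_left n n₀) hw2
      have hmem : (W.subtype w : R) ∈ (⨅ n : ℕ, maximalIdeal R ^ n : Ideal R) :=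
        Submodule.mem_iInf _ |>.mpr hall
      rw [hKrull] at hmem
      rw [Submodule.mem_bot] at hmem
      exact Subtype.ext hmem
    · rintro rfl; simp
  have hsmall : ∀ (A : Ideal R), A ≤ maximalIdeal R ^ n₀ → A ⊓ W = ⊥ := by
    intro A hA
    rw [eq_bot_iff]
    rintro r ⟨hrA, hrW⟩
    have : (⟨r, hrW⟩ : ↥W) ∈ Submodule.comap W.subtype
        ((maximalIdeal R ^ n₀ : Ideal R) : Submodule R R) := hA hrA
    rw [hbot, Submodule.mem_bot] at this
    have hr0 : r = 0 := congrArg Subtype.val this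
    rw [hr0]
    exact Submodule.zero_mem ⊥
  have hJm : Ideal.span {x} ≤ maximalIdeal R := hpar ▸ Ideal.le_radical
  have hIm : I ≤ maximalIdeal R := hI ▸ Ideal.le_radical
  -- lower bound on F n
  have hFlow : ∀ n : ℕ, I ^ n ≤ F n := by
    intro n
    have := (hFk n).1
    rwa [Int.toNat_natCast] at this
  -- finiteness bounds
  have hcJ : ∀ n : ℕ, maximalIdeal R ^ (t * (n + 1))
      ≤ Ideal.span {x} * Ideal.span {x} ^ n := by
    intro n
    rw [← pow_succ']
    calc maximalIdeal R ^ (t * (n + 1)) = (maximalIdeal R ^ t) ^ (n + 1) := by rw [pow_mul]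
      _ ≤ Ideal.span {x} ^ (n + 1) := Ideal.pow_right_mono ht _
  have hcF : ∀ n : ℕ, maximalIdeal R ^ (t + cI * n) ≤ Ideal.span {x} * F n := by
    intro n
    rw [pow_add]
    refine Ideal.mul_mono ht ?_
    calc maximalIdeal R ^ (cI * n) = (maximalIdeal R ^ cI) ^ n := by rw [pow_mul]
      _ ≤ I ^ n := Ideal.pow_right_mono hcI n
      _ ≤ F n := hFlow n
  -- disjointness
  have hdisjJ : ∀ n : ℕ, n₀ ≤ n → (Ideal.span {x} ^ n : Ideal R) ⊓ W = ⊥ := by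
    intro n hn
    exact hsmall _ (le_trans (Ideal.pow_right_mono hJm n) (Ideal.pow_le_pow_right hn))
  have hdisjF : ∀ n : ℕ, n₀ + k ≤ n → F n ⊓ W = ⊥ := by
    intro n hn
    apply hsmall
    have htn : n₀ ≤ ((n : ℤ) - k).toNat := by omega
    calc F n ≤ I ^ ((n : ℤ) - k).toNat := (hFk n).2
      _ ≤ maximalIdeal R ^ ((n : ℤ) - k).toNat := Ideal.pow_right_mono hIm _
      _ ≤ maximalIdeal R ^ n₀ := Ideal.pow_le_pow_right htn
  -- the length of R/(x)
  set lenW := modLen R ↥W with hlenW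
  set lenJ := modLen R (R ⧸ (Ideal.span {x} : Ideal R)) with hlenJ
  have hJval : (lenJ : ℤ) = f0 + lenW := by
    set n := max N1 n₀ + 1 with hn
    have hkey := key_len x (Ideal.span {x} ^ n) (hdisjJ n (by omega)) (t * (n + 1)) (hcJ n)
    rw [← pow_succ'] at hkey
    have hq1 := hN1 n (by omega)
    have hq2 := hN1 (n + 1) (by omega)
    have hcast : ((n : ℕ) + 1 : ℤ) = ((n + 1 : ℕ) : ℤ) := by push_cast; ring
    have hkey' : ((modLen R (R ⧸ (Ideal.span {x} ^ (n+1) : Ideal R)) : ℤ) + lenW)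
        = (lenJ : ℤ) + modLen R (R ⧸ (Ideal.span {x} ^ n : Ideal R)) := by
      exact_mod_cast congrArg (Nat.cast : ℕ → ℤ) hkey
    rw [hq1, hq2] at hkey'
    push_cast at hkey'
    linarith
  -- main statement
  refine ⟨max (max N1 N2) (n₀ + k) + 1, fun n hn => ?_⟩
  have hkey := key_len x (F n) (hdisjF n (by omega)) (t + cI * n) (hcF n)
  have hkey' : ((modLen R (R ⧸ (Ideal.span {x} * F n : Ideal R)) : ℤ) + lenW)
      = (lenJ : ℤ) + modLen R (R ⧸ F n) := by
    exact_mod_cast congrArg (Nat.cast : ℕ → ℤ) hkey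
  have hp1 := hN2 n (by omega)
  have hp2 := hN2 (n + 1) (by omega)
  rw [hp1, hJval, he] at hkey'
  have hcastF : ((n + 1 : ℕ) : ℤ) = (n : ℤ) + 1 := by push_cast; ring
  rw [hcastF] at hp2
  have hlen_eq : (modLen R (R ⧸ (Ideal.span {x} * F n : Ideal R)) : ℤ)
      = (modLen R (R ⧸ F ((n : ℤ) + 1)) : ℤ) := by
    rw [hp2]
    linarith
  have hAB : Ideal.span {x} * F n ≤ F ((n : ℤ) + 1) := by
    calc Ideal.span {x} * F n ≤ F 1 * F n := Ideal.mul_mono_left hx1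
      _ ≤ F (1 + n) := hF2 1 n
      _ = F ((n : ℤ) + 1) := by rw [add_comm]
  have hfl : IsFiniteLength R (R ⧸ (Ideal.span {x} * F n : Ideal R)) :=
    fl_of_pow_le _ (t + cI * n) (hcF n)
  exact eq_of_le_of_modLen_eq hAB hfl (by exact_mod_cast hlen_eq)
end

section
/- Let (R, m) be a 1-dimensional Cohen-Macaulay Noetherian local ring, I an m-primary ideal, 𝓘 = {I_n} an I-admissible filtration, and (x) a minimal reduction of 𝓘. Then for all n ≥ 1, length(I_{n-1}/I_n) ≤ e_0(𝓘), with equality if and only if I_n = x·I_{n-1}. -/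
open IsLocalRing

open Order

noncomputable def mlen (R M : Type*) [Ring R] [AddCommGroup M] [Module R M] : ℕ∞ :=
  Order.height (⊤ : Submodule R M)

/-- relative length of p over q -/
noncomputable def mRel {R M : Type*} [Ring R] [AddCommGroup M] [Module R M]
    (p q : Submodule R M) : ℕ∞ :=
  mlen R (p ⧸ Submodule.comap (Submodule.subtype p) q)

section OrderPart
variable {α β : Type*}

lemma height_subtype_le [Preorder α] (a : α) :
    Order.height (⟨a, le_refl a⟩ : {b // b ≤ a}) = Order.height a := by
  apply le_antisymm
  · have := Order.height_le_height_apply_of_strictMono (α := {b // b ≤ a}) (β := α)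
      (fun x => x.1) (fun x y h => h) ⟨a, le_refl a⟩
    exact this
  · apply Order.height_le
    intro p hlast
    let q : LTSeries {b // b ≤ a} :=
      ⟨p.length, fun i => ⟨p i, hlast ▸ p.monotone (Fin.le_last i)⟩,
        fun i => by exact p.step i⟩
    have hq : q.last = ⟨a, le_refl a⟩ := Subtype.ext (by simpa [q, RelSeries.last] using hlast)
    simpa [hq] using Order.length_le_height_last (p := q)

lemma height_prod_le [Preorder α] [Preorder β] (x : α × β) :
    Order.height x ≤ Order.height x.1 + Order.height x.2 := by
  apply Order.height_le
  intro p hlast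
  subst hlast
  suffices H : ∀ n (p : LTSeries (α × β)), p.length = n →
      (n : ℕ∞) ≤ Order.height p.last.1 + Order.height p.last.2 from H _ p rfl
  intro n
  induction n with
  | zero => simp
  | succ n ih =>
    intro p hp
    have hne : p.length ≠ 0 := by omega
    have hlt := p.eraseLast_last_rel_last hne
    have hih := ih p.eraseLast (by simp [hp])
    rcases Prod.lt_iff.mp hlt with ⟨h1, h2⟩ | ⟨h1, h2⟩
    · by_cases htop : Order.height p.last.1 = ⊤
      · rw [htop]; simp [top_add]
      · have hfin : Order.height p.eraseLast.last.1 < ⊤ :=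
          lt_of_le_of_lt (Order.height_mono h1.le) (lt_top_iff_ne_top.mpr htop)
        have hstep : Order.height p.eraseLast.last.1 + 1 ≤ Order.height p.last.1 :=
          (ENat.add_one_le_iff hfin.ne).mpr (Order.height_strictMono h1 hfin)
        calc ((n+1 : ℕ) : ℕ∞) = (n : ℕ∞) + 1 := by push_cast; ring
        _ ≤ Order.height p.eraseLast.last.1 + Order.height p.eraseLast.last.2 + 1 :=
            add_le_add hih le_rfl
        _ = (Order.height p.eraseLast.last.1 + 1) + Order.height p.eraseLast.last.2 := by ring
        _ ≤ Order.height p.last.1 + Order.height p.last.2 :=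
            add_le_add hstep (Order.height_mono h2)
    · by_cases htop : Order.height p.last.2 = ⊤
      · rw [htop]; simp [top_add]
      · have hfin : Order.height p.eraseLast.last.2 < ⊤ :=
          lt_of_le_of_lt (Order.height_mono h2.le) (lt_top_iff_ne_top.mpr htop)
        have hstep : Order.height p.eraseLast.last.2 + 1 ≤ Order.height p.last.2 :=
          (ENat.add_one_le_iff hfin.ne).mpr (Order.height_strictMono h2 hfin)
        calc ((n+1 : ℕ) : ℕ∞) = (n : ℕ∞) + 1 := by push_cast; ring
        _ ≤ Order.height p.eraseLast.last.1 + Order.height p.eraseLast.last.2 + 1 :=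
            add_le_add hih le_rfl
        _ = Order.height p.eraseLast.last.1 + (Order.height p.eraseLast.last.2 + 1) := by ring
        _ ≤ Order.height p.last.1 + Order.height p.last.2 :=
            add_le_add (Order.height_mono h1) hstep

private lemma enat_add_le_of_forall {x y z : ℕ∞}
    (h : ∀ n m : ℕ, (n : ℕ∞) ≤ x → (m : ℕ∞) ≤ y → (n : ℕ∞) + m ≤ z) : x + y ≤ z := by
  have hz : ∀ n : ℕ, (n : ℕ∞) ≤ x → (n : ℕ∞) ≤ z := fun n hn => by
    simpa using h n 0 hn (by simp)
  rcases eq_or_ne x ⊤ with rfl | hx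
  · have : z = ⊤ := by
      by_contra hzt
      lift z to ℕ using hzt
      have := hz (z + 1) le_top
      exact absurd this (by exact_mod_cast by omega)
    simp [this]
  rcases eq_or_ne y ⊤ with rfl | hy
  · have hz' : ∀ n : ℕ, (n : ℕ∞) ≤ z := by
      lift x to ℕ using hx
      exact fun n => le_trans le_add_self (h x n le_rfl le_top)
    have : z = ⊤ := by
      by_contra hzt
      lift z to ℕ using hzt
      have := hz' (z + 1)
      exact absurd this (by exact_mod_cast by omega)
    simp [this]
  lift x to ℕ using hx
  lift y to ℕ using hy
  exact_mod_cast h x y le_rfl le_rfl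

lemma height_top_interval_add [Lattice α] [BoundedOrder α] [IsModularLattice α] (a : α) :
    Order.height (⊤ : α) =
      Order.height a + Order.height (⟨⊤, le_top⟩ : {b // a ≤ b}) := by
  apply le_antisymm
  · set f : α → {b // b ≤ a} × {b // a ≤ b} :=
      fun x => (⟨x ⊓ a, inf_le_right⟩, ⟨x ⊔ a, le_sup_right⟩) with hf
    have hmono : Monotone f := fun x y h =>
      ⟨Subtype.mk_le_mk.mpr (inf_le_inf_right a h), Subtype.mk_le_mk.mpr (sup_le_sup_right h a)⟩
    have hsm : StrictMono f := by
      intro x y hxy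
      refine lt_of_le_of_ne (hmono hxy.le) (fun he => hxy.ne ?_)
      have h1 : y ⊓ a ≤ x ⊓ a := le_of_eq (congrArg (fun t => (t.1 : α)) he).symm
      have h2 : y ⊔ a ≤ x ⊔ a := le_of_eq (congrArg (fun t => (t.2 : α)) he).symm
      exact eq_of_le_of_inf_le_of_sup_le hxy.le h1 h2
    calc Order.height (⊤ : α) ≤ Order.height (f ⊤) :=
          Order.height_le_height_apply_of_strictMono f hsm ⊤
    _ ≤ Order.height (f ⊤).1 + Order.height (f ⊤).2 := height_prod_le _
    _ = Order.height a + Order.height (⟨⊤, le_top⟩ : {b // a ≤ b}) := by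
        have e1 : (f ⊤).1 = (⟨a, le_refl a⟩ : {b // b ≤ a}) := Subtype.ext (by simp [hf])
        have e2 : (f ⊤).2 = (⟨⊤, le_top⟩ : {b // a ≤ b}) := Subtype.ext (by simp [hf])
        rw [e1, e2, height_subtype_le]
  · apply enat_add_le_of_forall
    intro n m hn hm
    obtain ⟨p, hpl, hplen⟩ := Order.exists_series_of_le_height a hn
    obtain ⟨q, hql, hqlen⟩ := Order.exists_series_of_le_height _ hm
    let q' : LTSeries α := q.map (fun x => x.1) (fun x y h => h)
    have hq'last : q'.last = ⊤ := by
      show (q.last).1 = ⊤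
      rw [hql]
    have hq'head : a ≤ q'.head := q.head.2
    rcases eq_or_lt_of_le (hpl ▸ hq'head : p.last ≤ q'.head) with heq | hlt
    · let s := p.smash q' heq
      have hslen : s.length = n + m := by
        show (p.smash q' heq).length = n + m
        rw [RelSeries.smash_length]
        exact congrArg₂ (· + ·) hplen hqlen
      have hslast : s.last = ⊤ := by
        show (p.smash q' heq).last = ⊤
        rw [RelSeries.last_smash]; exact hq'last
      have := Order.length_le_height_last (p := s)
      rw [hslast, hslen] at this
      exact_mod_cast this
    · let s := p.append q' hlt
      have hslen : s.length = n + m + 1 := by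
        show (p.append q' hlt).length = n + m + 1
        rw [RelSeries.append_length]
        rw [hplen]; exact congrArg (fun t => n + t + 1) hqlen
      have hslast : s.last = ⊤ := by
        show (p.append q' hlt).last = ⊤
        rw [RelSeries.last_append]; exact hq'last
      have := Order.length_le_height_last (p := s)
      rw [hslast, hslen] at this
      calc ((n : ℕ∞) + m) ≤ ((n + m + 1 : ℕ) : ℕ∞) := by push_cast; simp [le_add_right]
      _ ≤ _ := this
end OrderPart


section MLen
variable {R M N : Type*} [Ring R] [AddCommGroup M] [Module R M] [AddCommGroup N] [Module R N]

lemma mlen_congr (e : M ≃ₗ[R] N) : mlen R M = mlen R N := by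
  have h := Order.height_orderIso (Submodule.orderIsoMapComap e) ⊤
  have htop : Submodule.orderIsoMapComap e ⊤ = ⊤ := by
    simp [Submodule.orderIsoMapComap, Submodule.map_top, LinearEquiv.range]
  rw [htop] at h
  exact h.symm

lemma mlen_add (p : Submodule R M) : mlen R M = mlen R p + mlen R (M ⧸ p) := by
  have h := height_top_interval_add (α := Submodule R M) p
  have h1 : mlen R p = Order.height p := by
    have := Order.height_orderIso (Submodule.MapSubtype.orderIso p) ⊤
    have htop : Submodule.MapSubtype.orderIso p ⊤ = ⟨p, le_refl p⟩ := by
      apply Subtype.ext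
      simp [Submodule.MapSubtype.orderIso, Submodule.map_top, Submodule.range_subtype]
    rw [htop] at this
    rw [mlen, ← this, height_subtype_le]
  have h2 : mlen R (M ⧸ p) = Order.height (⟨⊤, le_top⟩ : {b // p ≤ b}) := by
    have := Order.height_orderIso (Submodule.comapMkQRelIso p) ⊤
    have htop : Submodule.comapMkQRelIso p ⊤ = ⟨⊤, Set.mem_Ici.mpr le_top⟩ := by
      apply Subtype.ext
      simp [Submodule.comapMkQRelIso]
    rw [htop] at this
    rw [mlen]; exact this.symm
  rw [mlen, h, h1, h2]

lemma mlen_eq_zero_iff : mlen R M = 0 ↔ Subsingleton M := by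
  rw [mlen, Order.height_eq_zero]
  constructor
  · intro h
    rw [← Submodule.subsingleton_iff R]
    exact subsingleton_of_bot_eq_top (le_antisymm (h bot_le) bot_le).symm
  · intro h
    haveI := (Submodule.subsingleton_iff R (M := M)).mpr h
    intro b _
    exact le_of_eq (Subsingleton.elim _ _)

lemma mlen_simple_le_one [IsSimpleModule R M] : mlen R M ≤ 1 := by
  apply Order.height_le
  intro p _
  by_contra hlen
  push_cast at hlen
  have h2 : 2 ≤ p.length := by
    by_contra h
    push_neg at h
    interval_cases hl : p.length <;> simp_all <;> norm_num at hlen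
  have h01 : p ⟨0, by omega⟩ < p ⟨1, by omega⟩ := p.strictMono (by simp [Fin.lt_def])
  have h12 : p ⟨1, by omega⟩ < p ⟨2, by omega⟩ := p.strictMono (by simp [Fin.lt_def])
  rcases eq_bot_or_eq_top (p ⟨1, by omega⟩) with h | h
  · rw [h] at h01; exact not_lt_bot h01
  · rw [h] at h12; exact not_top_lt h12

lemma mlen_ne_top_of_isFiniteLength :
    ∀ {M : Type*} [AddCommGroup M] [Module R M], IsFiniteLength R M → mlen R M ≠ ⊤ := by
  intro M _ _ h
  induction h with
  | of_subsingleton =>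
    rename_i M' _ _ hsub
    rw [mlen_eq_zero_iff.mpr hsub]
    simp
  | of_simple_quotient h ih =>
    rename_i M' _ _ p _
    rw [mlen_add p]
    exact WithTop.add_ne_top.mpr ⟨ih, ne_top_of_le_ne_top WithTop.one_ne_top mlen_simple_le_one⟩

lemma mlen_ne_top [IsNoetherian R M] [IsArtinian R M] : mlen R M ≠ ⊤ :=
  mlen_ne_top_of_isFiniteLength (isFiniteLength_iff_isNoetherian_isArtinian.mpr ⟨‹_›, ‹_›⟩)

end MLen



section MRel
variable {R M N : Type*} [Ring R] [AddCommGroup M] [Module R M] [AddCommGroup N] [Module R N]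

lemma mRel_eq_map (p q : Submodule R M) :
    mRel p q = mlen R (Submodule.map q.mkQ p : Submodule R (M ⧸ q)) := by
  let f : p →ₗ[R] M ⧸ q := q.mkQ.comp p.subtype
  have hker : LinearMap.ker f = Submodule.comap p.subtype q := by
    rw [LinearMap.ker_comp, Submodule.ker_mkQ]
  have hrange : LinearMap.range f = Submodule.map q.mkQ p := by
    rw [LinearMap.range_comp, Submodule.range_subtype]
  have e := f.quotKerEquivRange
  rw [hker, hrange] at e
  exact mlen_congr e

lemma mRel_top (q : Submodule R M) : mRel ⊤ q = mlen R (M ⧸ q) := by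
  rw [mRel_eq_map, Submodule.map_top, Submodule.range_mkQ]
  exact mlen_congr Submodule.topEquiv

lemma mRel_eq_zero_iff {p q : Submodule R M} (hqp : q ≤ p) : mRel p q = 0 ↔ p = q := by
  rw [mRel, mlen_eq_zero_iff, Submodule.Quotient.subsingleton_iff,
    Submodule.comap_subtype_eq_top]
  exact ⟨fun h => le_antisymm h hqp, fun h => le_of_eq h⟩

lemma mRel_restrict {a b c : Submodule R M} (hba : b ≤ a) :
    mRel (Submodule.comap a.subtype b) (Submodule.comap a.subtype c) = mRel b c := by
  let e := Submodule.comapSubtypeEquivOfLe hba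
  have hmap : Submodule.map (e : Submodule.comap a.subtype b →ₗ[R] b)
      (Submodule.comap (Submodule.comap a.subtype b).subtype (Submodule.comap a.subtype c))
      = Submodule.comap b.subtype c := by
    ext y
    simp only [Submodule.mem_map, Submodule.mem_comap]
    constructor
    · rintro ⟨x, hx, rfl⟩
      exact hx
    · intro hy
      exact ⟨⟨⟨(y : M), hba y.2⟩, y.2⟩, hy, Subtype.ext rfl⟩
  exact mlen_congr (Submodule.Quotient.equiv _ _ e hmap)

lemma mRel_map_injective (f : M →ₗ[R] N) (hf : Function.Injective f)
    {p q : Submodule R M} (hqp : q ≤ p) :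
    mRel p q = mRel (Submodule.map f p) (Submodule.map f q) := by
  let e := Submodule.equivMapOfInjective f hf p
  have hmap : Submodule.map (e : p →ₗ[R] Submodule.map f p)
      (Submodule.comap p.subtype q)
      = Submodule.comap (Submodule.map f p).subtype (Submodule.map f q) := by
    ext y
    simp only [Submodule.mem_map, Submodule.mem_comap]
    constructor
    · rintro ⟨x, hx, rfl⟩
      exact ⟨(x : M), hx, rfl⟩
    · rintro hy
      obtain ⟨z, hz, hzy⟩ := hy
      refine ⟨⟨z, hqp hz⟩, hz, ?_⟩
      apply Subtype.ext
      exact hzy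
  exact mlen_congr (Submodule.Quotient.equiv _ _ e hmap)

lemma mRel_add {a b c : Submodule R M} (hcb : c ≤ b) (hba : b ≤ a) :
    mRel a c = mRel a b + mRel b c := by
  let b' := Submodule.comap a.subtype b
  let c' := Submodule.comap a.subtype c
  have hcb' : c' ≤ b' := Submodule.comap_mono hcb
  have h1 : mRel a c = mlen R (a ⧸ c') := rfl
  rw [h1, mlen_add (Submodule.map c'.mkQ b'), add_comm]
  congr 1
  · have e := Submodule.quotientQuotientEquivQuotient c' b' hcb'
    rw [mlen_congr e]
    rfl
  · rw [← mRel_eq_map b' c', mRel_restrict hba]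

end MRel
open IsLocalRing

section Art
variable {R : Type*} [CommRing R] [IsNoetherianRing R] [IsLocalRing R]

lemma isArtinian_of_fg_of_torsion (M : Type*) [AddCommGroup M] [Module R M]
    [Module.Finite R M]
    (htor : Module.IsTorsionBySet R M (maximalIdeal R : Set R)) : IsArtinian R M := by
  letI : Module (R ⧸ maximalIdeal R) M := htor.module
  haveI : IsScalarTower R (R ⧸ maximalIdeal R) M := Module.IsTorsionBySet.isScalarTower htor
  haveI : Module.Finite (R ⧸ maximalIdeal R) M :=
    Module.Finite.of_restrictScalars_finite R (R ⧸ maximalIdeal R) M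
  haveI : IsArtinianRing (R ⧸ maximalIdeal R) := by
    letI := Ideal.Quotient.field (maximalIdeal R)
    infer_instance
  haveI hart : IsArtinian (R ⧸ maximalIdeal R) M := isArtinian_of_fg_of_artinian'
  let f : Submodule R M ↪o Submodule (R ⧸ maximalIdeal R) M :=
    { toFun := fun p =>
        { carrier := p
          add_mem' := fun h1 h2 => p.add_mem h1 h2
          zero_mem' := p.zero_mem
          smul_mem' := by
            intro c x hx
            obtain ⟨r, rfl⟩ := Ideal.Quotient.mk_surjective c
            have : (Ideal.Quotient.mk (maximalIdeal R) r) • x = r • x :=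
              Module.IsTorsionBySet.mk_smul htor r x
            rw [this]
            exact p.smul_mem r hx }
      inj' := by
        intro p q h
        ext x
        exact SetLike.ext_iff.mp h x
      map_rel_iff' := Iff.rfl }
  exact ⟨f.wellFounded hart.wf⟩

lemma isArtinian_quot_of_pow_le :
    ∀ (k : ℕ) (J : Ideal R), maximalIdeal R ^ k ≤ J → IsArtinian R (R ⧸ J) := by
  intro k
  induction k with
  | zero =>
    intro J hJ
    rw [pow_zero, Ideal.one_eq_top] at hJ
    have : J = ⊤ := top_le_iff.mp hJ
    subst this
    haveI : Subsingleton (R ⧸ (⊤ : Ideal R)) :=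
      Submodule.Quotient.subsingleton_iff.mpr rfl
    haveI : Finite (R ⧸ (⊤ : Ideal R)) := Finite.of_subsingleton
    infer_instance
  | succ k ih =>
    intro J hJ
    set K := J ⊔ maximalIdeal R ^ k with hK
    set S := Submodule.map J.mkQ K with hS
    haveI artQ : IsArtinian R ((R ⧸ J) ⧸ S) := by
      have e := Submodule.quotientQuotientEquivQuotient J K le_sup_left
      haveI := ih K le_sup_right
      exact isArtinian_of_linearEquiv e.symm
    haveI : Module.Finite R S :=
      Module.Finite.iff_fg.mpr (IsNoetherian.noetherian S)
    have htor : Module.IsTorsionBySet R S (maximalIdeal R : Set R) := by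
      rintro ⟨x, hx⟩ ⟨r, hr⟩
      apply Subtype.ext
      show r • x = 0
      obtain ⟨s, hs, rfl⟩ := hx
      show r • (J.mkQ s) = (0 : R ⧸ J)
      rw [← map_smul, Submodule.mkQ_apply, Submodule.Quotient.mk_eq_zero]
      obtain ⟨a, ha, b, hb, rfl⟩ := Submodule.mem_sup.mp hs
      rw [smul_add]
      apply J.add_mem
      · exact J.smul_mem r ha
      · have : r • b ∈ maximalIdeal R ^ (k + 1) := by
          rw [pow_succ, mul_comm]
          exact Ideal.mul_mem_mul hr hb
        exact hJ this
    haveI : IsArtinian R S := isArtinian_of_fg_of_torsion S htor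
    exact (isArtinian_iff_submodule_quotient S).mpr ⟨‹_›, artQ⟩

end Art

lemma map_lsmul_eq {R : Type*} [CommRing R] (x : R) (A : Ideal R) :
    Submodule.map (LinearMap.lsmul R R x) A = Ideal.span {x} * A := by
  ext r
  simp only [Submodule.mem_map, LinearMap.lsmul_apply, smul_eq_mul, Ideal.mem_span_singleton_mul]

lemma key_lemma {R : Type*} [CommRing R] (x : R) (hreg : IsSMulRegular R x) (A B : Ideal R)
    (hBA : B ≤ A) (hxAB : Ideal.span {x} * A ≤ B)
    (hfin : mlen R (R ⧸ (Ideal.span {x} * A)) ≠ ⊤) :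
    mRel A B ≤ mlen R (R ⧸ Ideal.span {x}) ∧
      (mRel A B = mlen R (R ⧸ Ideal.span {x}) ↔ B = Ideal.span {x} * A) := by
  set xA := Ideal.span {x} * A with hxA
  set xR := Ideal.span ({x} : Set R) with hxR
  have hxA_le_A : xA ≤ A := Ideal.mul_le_right
  have hxA_le_xR : xA ≤ xR := Ideal.mul_le_left
  have h1 : mRel ⊤ xA = mRel ⊤ A + mRel A xA := mRel_add hxA_le_A le_top
  have h2 : mRel ⊤ xA = mRel ⊤ xR + mRel xR xA := mRel_add hxA_le_xR le_top
  have h3 : mRel xR xA = mRel ⊤ A := by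
    have h := mRel_map_injective (LinearMap.lsmul R R x) hreg (le_top : A ≤ ⊤)
    rw [Submodule.map_top] at h
    have hr : LinearMap.range (LinearMap.lsmul R R x) = xR := by
      rw [LinearMap.range_eq_map, map_lsmul_eq, Ideal.mul_top]
    rw [hr, map_lsmul_eq] at h
    exact h.symm
  have htop : mRel ⊤ xA ≠ ⊤ := by rw [mRel_top]; exact hfin
  have hfa : mRel ⊤ A ≠ ⊤ := (WithTop.add_ne_top.mp (h1 ▸ htop)).1
  have hAxA : mRel A xA ≠ ⊤ := (WithTop.add_ne_top.mp (h1 ▸ htop)).2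
  have hcancel : mRel A xA = mRel ⊤ xR := by
    have : mRel ⊤ A + mRel A xA = mRel ⊤ A + mRel ⊤ xR := by
      rw [← h1, h2, h3]; ring
    exact WithTop.add_left_cancel hfa this
  have hE : mlen R (R ⧸ xR) = mRel A xA := by rw [hcancel, mRel_top]
  have h5 : mRel A xA = mRel A B + mRel B xA := mRel_add hxAB hBA
  have hABfin : mRel A B ≠ ⊤ := by
    intro h
    apply hAxA
    rw [h5, h, top_add]
  constructor
  · rw [hE, h5]; exact le_self_add
  · rw [hE]
    constructor
    · intro h
      have : mRel A B + mRel B xA = mRel A B + 0 := by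
        rw [add_zero, ← h5, h]
      have h0 := WithTop.add_left_cancel hABfin this
      exact (mRel_eq_zero_iff hxAB).mp h0
    · intro h
      have h0 : mRel B xA = 0 := (mRel_eq_zero_iff hxAB).mpr h
      rw [h5, h0, add_zero]

lemma modLen_cast {R M : Type*} [CommRing R] [AddCommGroup M] [Module R M]
    (h : mlen R M ≠ ⊤) : (modLen R M : ℕ∞) = mlen R M := by
  have hk : Order.krullDim (Submodule R M) =
      ((Order.height (⊤ : Submodule R M) : ℕ∞) : WithBot ℕ∞) :=
    (Order.height_top_eq_krullDim).symm
  rw [modLen, hk, WithBot.unbotD_coe]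
  exact ENat.coe_toNat h

lemma idealQuotLen_cast {R : Type*} [CommRing R] (A B : Ideal R)
    (h : mRel (A : Submodule R R) B ≠ ⊤) :
    (idealQuotLen R A B : ℕ∞) = mRel (A : Submodule R R) B :=
  modLen_cast h
theorem stmt3 {R : Type*} [CommRing R] [IsNoetherianRing R] [IsLocalRing R]
    (hdim : ringKrullDim R = 1)
    (hCM : ∀ a : R, (Ideal.span {a}).radical = maximalIdeal R → IsSMulRegular R a)
    (I : Ideal R) (hI : I.radical = maximalIdeal R)
    (F : ℤ → Ideal R) (hF : IsAdmissibleFiltration I F)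
    (x : R) (hx1 : x ∈ F 1)
    (hred : ∃ N : ℕ, ∀ n : ℕ, N ≤ n → Ideal.span {x} * F n = F (n + 1))
    (e0 e1 : ℤ)
    (hP : ∃ N : ℕ, ∀ n : ℕ, N ≤ n → (modLen R (R ⧸ F n) : ℤ) = e0 * n - e1) :
    ∀ n : ℕ, 1 ≤ n →
      (idealQuotLen R (F ((n : ℤ) - 1)) (F n) : ℤ) ≤ e0 ∧
      ((idealQuotLen R (F ((n : ℤ) - 1)) (F n) : ℤ) = e0 ↔
        F n = Ideal.span {x} * F ((n : ℤ) - 1)) := by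
  classical
  obtain ⟨hdec, hmulF, hneg, k, hcomp⟩ := hF
  obtain ⟨N1, hred⟩ := hred
  obtain ⟨N2, hP⟩ := hP
  set m := maximalIdeal R with hm
  obtain ⟨c0, hc0⟩ := Ideal.exists_pow_le_of_le_radical_of_fg
    (le_of_eq hI.symm) (IsNoetherian.noetherian _)
  set c := c0 + 1 with hc
  have hcI : m ^ c ≤ I := le_trans (Ideal.pow_le_pow_right (Nat.le_succ c0)) hc0
  have hIF : ∀ t : ℕ, I ^ t ≤ F t := fun t => by
    have := (hcomp (t : ℤ)).1
    rwa [Int.toNat_natCast] at this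
  have hmF : ∀ t : ℕ, m ^ (c * t) ≤ F t := fun t => by
    calc m ^ (c * t) = (m ^ c) ^ t := by rw [pow_mul]
    _ ≤ I ^ t := Ideal.pow_right_mono hcI t
    _ ≤ F t := hIF t
  have hxF1 : Ideal.span {x} ≤ F 1 := by
    rwa [Ideal.span_le, Set.singleton_subset_iff]
  have hredN : Ideal.span {x} * F (N1 : ℤ) = F ((N1 : ℤ) + 1) := hred N1 le_rfl
  have hxpow : m ^ (c * (N1 + 1)) ≤ Ideal.span {x} := by
    calc m ^ (c * (N1 + 1)) ≤ F ((N1 + 1 : ℕ) : ℤ) := hmF (N1 + 1)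
    _ = F ((N1 : ℤ) + 1) := by norm_cast
    _ = Ideal.span {x} * F (N1 : ℤ) := hredN.symm
    _ ≤ Ideal.span {x} := Ideal.mul_le_left
  have hreg : IsSMulRegular R x := by
    by_cases hu : IsUnit x
    · intro a b hab
      simp only [smul_eq_mul] at hab
      exact hu.mul_left_cancel hab
    · apply hCM
      apply le_antisymm
      · calc (Ideal.span {x}).radical ≤ m.radical := Ideal.radical_mono (by
              rw [Ideal.span_le, Set.singleton_subset_iff]
              show x ∈ m
              rw [hm]
              exact (IsLocalRing.mem_maximalIdeal x).mpr (mem_nonunits_iff.mpr hu))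
        _ = m := ((maximalIdeal.isMaximal R).isPrime).radical
      · intro r hr
        exact Ideal.mem_radical_iff.mpr ⟨c * (N1 + 1), hxpow (Ideal.pow_mem_pow hr _)⟩
  have hfinJ : ∀ (t : ℕ) (J : Ideal R), m ^ t ≤ J → mlen R (R ⧸ J) ≠ ⊤ := by
    intro t J hJ
    haveI := isArtinian_quot_of_pow_le t J hJ
    exact mlen_ne_top
  set E : ℕ := (mlen R (R ⧸ Ideal.span ({x} : Set R))).toNat with hE
  have hfinxR : mlen R (R ⧸ Ideal.span ({x} : Set R)) ≠ ⊤ := hfinJ _ _ hxpow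
  have hEcast : (E : ℕ∞) = mlen R (R ⧸ Ideal.span ({x} : Set R)) := ENat.coe_toNat hfinxR
  have keyat : ∀ (t : ℕ) (B : Ideal R), B ≤ F (t : ℤ) → Ideal.span {x} * F (t : ℤ) ≤ B →
      (mRel (F (t : ℤ) : Submodule R R) B ≤ mlen R (R ⧸ Ideal.span ({x} : Set R)) ∧
        (mRel (F (t : ℤ) : Submodule R R) B = mlen R (R ⧸ Ideal.span ({x} : Set R)) ↔
          B = Ideal.span {x} * F (t : ℤ))) := by
    intro t B h1 h2
    apply key_lemma x hreg _ _ h1 h2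
    apply hfinJ (c * (N1 + 1) + c * t)
    calc m ^ (c * (N1 + 1) + c * t) = m ^ (c * (N1 + 1)) * m ^ (c * t) := pow_add m _ _
    _ ≤ Ideal.span {x} * F (t : ℤ) := Ideal.mul_mono hxpow (hmF t)
  have hxmul : ∀ s : ℤ, Ideal.span {x} * F s ≤ F (s + 1) := fun s => by
    calc Ideal.span {x} * F s ≤ F 1 * F s := Ideal.mul_mono hxF1 le_rfl
    _ ≤ F (1 + s) := hmulF 1 s
    _ = F (s + 1) := by rw [add_comm]
  -- identify e0
  set n0 := max N1 N2 with hn0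
  have hredn0 : Ideal.span {x} * F (n0 : ℤ) = F ((n0 : ℤ) + 1) := hred n0 (le_max_left _ _)
  have hkey0 := keyat n0 (F ((n0 : ℤ) + 1)) (hdec (n0 : ℤ)) (le_of_eq hredn0)
  have hEq0 : mRel (F (n0 : ℤ) : Submodule R R) (F ((n0 : ℤ) + 1))
      = mlen R (R ⧸ Ideal.span ({x} : Set R)) := hkey0.2.mpr hredn0.symm
  have hadd0 : mlen R (R ⧸ F ((n0 : ℤ) + 1)) = mlen R (R ⧸ F (n0 : ℤ))
      + mRel (F (n0 : ℤ) : Submodule R R) (F ((n0 : ℤ) + 1)) := by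
    rw [← mRel_top, ← mRel_top]
    exact mRel_add (hdec (n0 : ℤ)) le_top
  have hidx0 : ((n0 + 1 : ℕ) : ℤ) = (n0 : ℤ) + 1 := by push_cast; ring
  have hfin1 : mlen R (R ⧸ F ((n0 : ℤ) + 1)) ≠ ⊤ := by
    apply hfinJ (c * (n0 + 1))
    rw [← hidx0]
    exact hmF (n0 + 1)
  have hfin0 : mlen R (R ⧸ F (n0 : ℤ)) ≠ ⊤ := hfinJ (c * n0) _ (hmF n0)
  have hnat : modLen R (R ⧸ F ((n0 : ℤ) + 1)) = modLen R (R ⧸ F (n0 : ℤ)) + E := by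
    have h : (modLen R (R ⧸ F ((n0 : ℤ) + 1)) : ℕ∞)
        = ((modLen R (R ⧸ F (n0 : ℤ)) + E : ℕ) : ℕ∞) := by
      push_cast
      rw [modLen_cast hfin1, modLen_cast hfin0, hadd0, hEq0, hEcast]
    exact_mod_cast h
  have hP0 := hP n0 (le_max_right _ _)
  have hP1 := hP (n0 + 1) (le_trans (le_max_right _ _) (Nat.le_succ n0))
  rw [hidx0] at hP1
  have he0 : e0 = (E : ℤ) := by
    rw [hnat] at hP1
    push_cast at hP0 hP1
    linarith
  -- main part
  intro n hn
  have hidx : ((n : ℤ) - 1) = ((n - 1 : ℕ) : ℤ) := by omega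
  have hBA : F (n : ℤ) ≤ F ((n : ℤ) - 1) := by
    have h := hdec ((n : ℤ) - 1)
    rwa [sub_add_cancel] at h
  have hxAB : Ideal.span {x} * F ((n : ℤ) - 1) ≤ F (n : ℤ) := by
    have h := hxmul ((n : ℤ) - 1)
    rwa [sub_add_cancel] at h
  have hkey := keyat (n - 1) (F (n : ℤ)) (by rw [← hidx]; exact hBA) (by rw [← hidx]; exact hxAB)
  rw [← hidx] at hkey
  obtain ⟨hle, hiff⟩ := hkey
  have hABfin : mRel (F ((n : ℤ) - 1) : Submodule R R) (F (n : ℤ)) ≠ ⊤ :=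
    ne_top_of_le_ne_top hfinxR hle
  have hql : (idealQuotLen R (F ((n : ℤ) - 1)) (F (n : ℤ)) : ℕ∞)
      = mRel (F ((n : ℤ) - 1) : Submodule R R) (F (n : ℤ)) :=
    idealQuotLen_cast _ _ hABfin
  constructor
  · rw [he0]
    have h : (idealQuotLen R (F ((n : ℤ) - 1)) (F (n : ℤ)) : ℕ∞) ≤ (E : ℕ∞) := by
      rw [hql, hEcast]; exact hle
    exact_mod_cast h
  · rw [he0]
    constructor
    · intro h
      apply hiff.mp
      rw [← hql, ← hEcast]
      exact_mod_cast h
    · intro h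
      have h2 := hiff.mpr h
      have h3 : (idealQuotLen R (F ((n : ℤ) - 1)) (F (n : ℤ)) : ℕ∞) = (E : ℕ∞) := by
        rw [hql, hEcast]; exact h2
      exact_mod_cast h3
end

section
/- Let (R, m) be a 2-dimensional Noetherian local ring, J = (x, y) a parameter ideal, and 𝓙 = {J_n} a J-admissible filtration such that the image x* of x in J_1/J_2 is a nonzerodivisor in the associated graded ring G(𝓙). For the subcomplex K^{(n)}(𝓙): 0 → J_{n-2} --(y,x)--> J_{n-1}² --(-x,y)ᵗ--> J_n → 0 of the Koszul complex K(x, y), the first homology satisfies H_1(K^{(n)}(𝓙)) ≅ ((x : y) ∩ J_{n-1}) / (x·J_{n-2}). -/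
open IsLocalRing

/-- Kernel of the map `g_n : J_{n-1}² → J_n`, `(a,b) ↦ -ax + by`, viewed inside `R × R`:
pairs `(a, b)` with both entries in `A` and `-a*x + b*y = 0`. -/
noncomputable def koszulKer {R : Type*} [CommRing R] (x y : R) (A : Ideal R) :
    Submodule R (R × R) :=
  Submodule.prod (A : Submodule R R) (A : Submodule R R) ⊓
    LinearMap.ker (y • LinearMap.snd R R R - x • LinearMap.fst R R R)

/-- Image of the map `f_n : J_{n-2} → J_{n-1}²`, `c ↦ (cy, cx)`, viewed inside `R × R`. -/
noncomputable def koszulIm {R : Type*} [CommRing R] (x y : R) (A : Ideal R) :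
    Submodule R (R × R) :=
  Submodule.map
    (LinearMap.prod (LinearMap.toSpanSingleton R R y) (LinearMap.toSpanSingleton R R x))
    (A : Submodule R R)

section Aux

variable {R : Type*} [CommRing R]

lemma filt_antitone {I : Ideal R} {F : ℤ → Ideal R} (hF : IsAdmissibleFiltration I F) :
    ∀ a b : ℤ, a ≤ b → F b ≤ F a := by
  have step : ∀ (c : ℕ) (a : ℤ), F (a + c) ≤ F a := by
    intro c
    induction c with
    | zero => intro a; simp
    | succ k ih =>
        intro a
        have h1 : F (a + (k : ℤ) + 1) ≤ F (a + (k : ℤ)) := hF.1 _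
        have : (a + ((k + 1 : ℕ) : ℤ)) = a + (k : ℤ) + 1 := by push_cast; ring
        rw [this]
        exact le_trans h1 (ih a)
  intro a b hab
  have : b = a + ((b - a).toNat : ℤ) := by omega
  rw [this]
  exact step _ a

lemma x_regular {R : Type*} [CommRing R] [IsNoetherianRing R] [IsLocalRing R]
    {x y : R} (hpar : (Ideal.span {x, y}).radical = maximalIdeal R)
    {F : ℤ → Ideal R} (hF : IsAdmissibleFiltration (Ideal.span {x, y}) F)
    (hreg : ∀ n : ℤ, 0 ≤ n → ∀ a ∈ F n, x * a ∈ F (n + 2) → a ∈ F (n + 1))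
    {a : R} (ha : x * a = 0) : a = 0 := by
  have hall : ∀ m : ℕ, a ∈ F m := by
    intro m
    induction m with
    | zero => push_cast; rw [hF.2.2.1 0 le_rfl]; trivial
    | succ k ih =>
        push_cast
        exact hreg k (by positivity) a ih (by rw [ha]; exact Submodule.zero_mem _)
  obtain ⟨k, hk⟩ := hF.2.2.2
  have hIm : Ideal.span {x, y} ≤ maximalIdeal R := hpar ▸ Ideal.le_radical
  have hmbot : (⨅ i : ℕ, maximalIdeal R ^ i) = ⊥ :=
    Ideal.iInf_pow_eq_bot_of_isLocalRing _ (IsLocalRing.maximalIdeal.isMaximal R).ne_top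
  have : a ∈ (⨅ i : ℕ, maximalIdeal R ^ i) := by
    refine Submodule.mem_iInf _ |>.mpr fun i => ?_
    have h1 : a ∈ F (i + k) := hall (i + k)
    have h2 := (hk ((i : ℤ) + k)).2 (by exact_mod_cast h1)
    have h3 : a ∈ Ideal.span {x, y} ^ i := by
      have he : ((i : ℤ) + k - k).toNat = i := by omega
      rwa [he] at h2
    exact Ideal.pow_right_mono hIm i h3
  simpa [hmbot] using this

end Aux

theorem stmt6 {R : Type*} [CommRing R] [IsNoetherianRing R] [IsLocalRing R]
    (hdim : ringKrullDim R = 2) (x y : R)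
    (hpar : (Ideal.span {x, y}).radical = maximalIdeal R)
    (F : ℤ → Ideal R) (hF : IsAdmissibleFiltration (Ideal.span {x, y}) F)
    (hx1 : x ∈ F 1) (hy1 : y ∈ F 1)
    (hreg : ∀ n : ℤ, 0 ≤ n → ∀ a ∈ F n, x * a ∈ F (n + 2) → a ∈ F (n + 1))
    (n : ℤ) :
    Nonempty
      ((↥(koszulKer x y (F (n - 1))) ⧸
          Submodule.comap (koszulKer x y (F (n - 1))).subtype (koszulIm x y (F (n - 2)))) ≃ₗ[R]
        (↥(Submodule.colon (Ideal.span {x} : Submodule R R) (Ideal.span {y}) ⊓ F (n - 1)) ⧸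
          Submodule.comap
            (Submodule.colon (Ideal.span {x} : Submodule R R) (Ideal.span {y}) ⊓
              F (n - 1) : Ideal R).subtype
            ((Ideal.span {x} * F (n - 2) : Ideal R) : Submodule R R))) := by
  have hxreg : ∀ a : R, x * a = 0 → a = 0 := fun a ha => x_regular hpar hF hreg ha
  set S : Ideal R :=
    Submodule.colon (Ideal.span {x} : Submodule R R) (Ideal.span {y}) ⊓ F (n - 1) with hS
  set B : Submodule R S :=
    Submodule.comap (S : Submodule R R).subtype
      ((Ideal.span {x} * F (n - 2) : Ideal R) : Submodule R R) with hB
  have hker_mem : ∀ p : R × R, p ∈ koszulKer x y (F (n - 1)) ↔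
      (p.1 ∈ F (n - 1) ∧ p.2 ∈ F (n - 1)) ∧ y * p.2 - x * p.1 = 0 := by
    intro p
    simp [koszulKer, Submodule.mem_prod, smul_eq_mul, sub_eq_zero]
  have hcolon : ∀ b : R, b * y ∈ Ideal.span {x} →
      b ∈ Submodule.colon (Ideal.span {x} : Submodule R R) (Ideal.span {y}) := by
    intro b hb
    rw [Submodule.mem_colon]
    intro p hp
    replace hp : p ∈ Ideal.span {y} := hp
    rw [Ideal.mem_span_singleton] at hp
    obtain ⟨c, rfl⟩ := hp
    have h2 : b • (y * c) = b * y * c := by rw [smul_eq_mul]; ring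
    rw [h2]
    exact Ideal.mul_mem_right _ _ hb
  have hφmem : ∀ p : ↥(koszulKer x y (F (n - 1))), (p : R × R).2 ∈ S := by
    intro ⟨p, hp⟩
    rw [hker_mem] at hp
    refine ⟨hcolon _ ?_, hp.1.2⟩
    rw [Ideal.mem_span_singleton]
    exact ⟨p.1, by linear_combination hp.2⟩
  let φ : ↥(koszulKer x y (F (n - 1))) →ₗ[R] S :=
    { toFun := fun p => ⟨(p : R × R).2, hφmem p⟩
      map_add' := fun p q => rfl
      map_smul' := fun r p => rfl }
  let ψ := (B.mkQ).comp φ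
  have hkerψ : Submodule.comap (koszulKer x y (F (n - 1))).subtype (koszulIm x y (F (n - 2)))
      = LinearMap.ker ψ := by
    ext ⟨p, hp⟩
    have hp' := (hker_mem p).mp hp
    simp only [Submodule.mem_comap, LinearMap.mem_ker, ψ, LinearMap.comp_apply,
      Submodule.mkQ_apply, Submodule.Quotient.mk_eq_zero, Submodule.mem_comap, hB]
    constructor
    · rintro h
      simp only [koszulIm, Submodule.mem_map] at h
      obtain ⟨c, hc, hceq⟩ := h
      rw [Prod.ext_iff] at hceq
      simp only [LinearMap.prod_apply, Function.prod, LinearMap.toSpanSingleton_apply,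
        Submodule.subtype_apply, smul_eq_mul] at hceq
      show ((φ ⟨p, hp⟩ : S) : R) ∈ (Ideal.span {x} * F (n - 2) : Ideal R)
      have : ((φ ⟨p, hp⟩ : S) : R) = x * c := by
        show p.2 = x * c
        rw [← hceq.2]; ring
      rw [this]
      exact Ideal.mul_mem_mul (Ideal.mem_span_singleton_self x) hc
    · intro h
      have hb : (p.2 : R) ∈ Ideal.span {x} * F (n - 2) := h
      rw [Ideal.mem_span_singleton_mul] at hb
      obtain ⟨c, hc, hceq⟩ := hb
      simp only [koszulIm, Submodule.mem_map]
      refine ⟨c, hc, ?_⟩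
      have hax : x * (c * y - p.1) = 0 := by linear_combination y * hceq + hp'.2
      have h1 : c * y = p.1 := sub_eq_zero.mp (hxreg _ hax)
      rw [Prod.ext_iff]
      simp only [LinearMap.prod_apply, Function.prod, LinearMap.toSpanSingleton_apply,
        smul_eq_mul]
      exact ⟨show c * y = p.1 from h1, show c * x = p.2 by linear_combination hceq⟩
  have hsurj : Function.Surjective ψ := by
    intro q
    obtain ⟨⟨b, hb⟩, rfl⟩ := B.mkQ_surjective q
    have hbc : b * y ∈ Ideal.span {x} := by
      have h0 : b ∈ Submodule.colon (Ideal.span {x} : Submodule R R) (Ideal.span {y}) := hb.1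
      rw [Submodule.mem_colon] at h0
      have := h0 y (Ideal.mem_span_singleton_self y)
      simpa [smul_eq_mul, mul_comm] using this
    rw [Ideal.mem_span_singleton] at hbc
    obtain ⟨a, ha⟩ := hbc
    have haF : a ∈ F (n - 1) := by
      have hxy : x * a ∈ F n := by
        rw [← ha]
        have := hF.2.1 (n - 1) 1 (Ideal.mul_mem_mul hb.2 hy1)
        simpa using this
      by_cases hn : n - 1 ≤ 0
      · rw [hF.2.2.1 _ hn]; trivial
      · push_neg at hn
        have key : ∀ m : ℕ, (m : ℤ) ≤ n - 1 → a ∈ F m := by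
          intro m
          induction m with
          | zero => intro _; push_cast; rw [hF.2.2.1 0 le_rfl]; trivial
          | succ k ih =>
              intro hm
              have hk' : (k : ℤ) ≤ n - 1 := by push_cast at hm ⊢; omega
              have hak : a ∈ F k := ih hk'
              have hxk : x * a ∈ F ((k : ℤ) + 2) := by
                refine filt_antitone hF _ _ ?_ hxy
                push_cast at hm ⊢; omega
              push_cast
              exact hreg k (by positivity) a hak hxk
        have h5 : a ∈ F ((n - 1).toNat) := key (n - 1).toNat (by omega)
        have he : (((n - 1).toNat : ℤ)) = n - 1 := by omega
        rwa [he] at h5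
    have hpket : ((a, b) : R × R) ∈ koszulKer x y (F (n - 1)) := by
      rw [hker_mem]
      exact ⟨⟨haF, hb.2⟩, by linear_combination ha⟩
    exact ⟨⟨(a, b), hpket⟩, rfl⟩
  exact ⟨(Submodule.quotEquivOfEq _ _ hkerψ).trans (ψ.quotKerEquivOfSurjective hsurj)⟩
end
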